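/- Let ρ_d > 0, b ∈ ℝ, let α : ℝ → (0, ∞) and ω : ℝ → (0, ∞) be continuous, and let (A*, Ω*) be a C¹ solution of the Approximation 4 system for t > 0. Then for all t > 1/ρ_d, the total proliferating population Ω̄(t) = ∫₀¹ Ω*(x,t) dx satisfies the delay differential equation dΩ̄/dt = ω(Ω̄(t))·A*(t) − exp( b/ρ_d − C(t) )·ω(Ω̄(t − 1/ρ_d))·A*(t − 1/ρ_d) + (b − α(A*(t)))·Ω̄(t), where C(t) = ∫_{t − 1/ρ_d}^{t} α(A*(u)) du; moreover dC/dt = α(A*(t)) − α(A*(t − 1/ρ_d)). -/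

import Mathlib

open Real Set

/-- `(A, Ω)` is a C¹ solution of the Approximation 4 system for `t > 0`:
`dA/dt = −ω(Ω̄(t)) A(t) + α(A(t)) Ω̄(t)`;
`∂Ω/∂t + ρ ∂Ω/∂x = (b − α(A(t))) Ω(x,t)` for `x ∈ [0,1]`;
`Ω(0,t) = ω(Ω̄(t)) A(t) / ρ`, where `Ω̄(t) = ∫₀¹ Ω(x,t) dx`.
Here `Ωt` and `Ωx` are the (continuous) partial derivatives of `Ω`. -/
def IsApprox4Solution (ρ b : ℝ) (α ω : ℝ → ℝ) (A : ℝ → ℝ)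
    (Ω Ωt Ωx : ℝ → ℝ → ℝ) : Prop :=
  (∀ t ∈ Set.Ioi (0 : ℝ),
    HasDerivAt A
      (-(ω (∫ x in (0 : ℝ)..1, Ω x t)) * A t +
        α (A t) * ∫ x in (0 : ℝ)..1, Ω x t) t) ∧
  (∀ t ∈ Set.Ioi (0 : ℝ), ∀ x ∈ Set.Icc (0 : ℝ) 1,
    HasDerivAt (fun s => Ω x s) (Ωt x t) t ∧
    HasDerivWithinAt (fun y => Ω y t) (Ωx x t) (Set.Icc 0 1) x ∧
    Ωt x t + ρ * Ωx x t = (b - α (A t)) * Ω x t) ∧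
  (∀ t ∈ Set.Ioi (0 : ℝ),
    Ω 0 t = ω (∫ x in (0 : ℝ)..1, Ω x t) * A t / ρ) ∧
  ContinuousOn (fun p : ℝ × ℝ => Ω p.1 p.2) (Set.Icc 0 1 ×ˢ Set.Ioi 0) ∧
  ContinuousOn (fun p : ℝ × ℝ => Ωt p.1 p.2) (Set.Icc 0 1 ×ˢ Set.Ioi 0) ∧
  ContinuousOn (fun p : ℝ × ℝ => Ωx p.1 p.2) (Set.Icc 0 1 ×ˢ Set.Ioi 0)

open MeasureTheory Topology Filter

set_option maxHeartbeats 1000000 in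
/-- Let `ρ > 0`, `b ∈ ℝ`, `α, ω : ℝ → (0,∞)` continuous, and let
`(A, Ω)` be a C¹ solution of the Approximation 4 system for `t > 0`.  Then for all
`t > 1/ρ`, the total population `Ω̄(t) = ∫₀¹ Ω(x,t) dx` satisfies the delay
differential equation
`dΩ̄/dt = ω(Ω̄(t)) A(t) − e^{b/ρ − C(t)} ω(Ω̄(t − 1/ρ)) A(t − 1/ρ) + (b − α(A(t))) Ω̄(t)`
with `C(t) = ∫_{t−1/ρ}^t α(A(u)) du`, and moreover
`dC/dt = α(A(t)) − α(A(t − 1/ρ))`. -/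
theorem stmt11 (ρ b : ℝ) (hρ : 0 < ρ) (α ω : ℝ → ℝ)
    (hαc : Continuous α) (hωc : Continuous ω)
    (hαpos : ∀ A : ℝ, 0 < α A) (hωpos : ∀ Ω : ℝ, 0 < ω Ω)
    (A : ℝ → ℝ) (Ω Ωt Ωx : ℝ → ℝ → ℝ)
    (hsol : IsApprox4Solution ρ b α ω A Ω Ωt Ωx) :
    ∀ t : ℝ, 1 / ρ < t →
      HasDerivAt (fun s => ∫ x in (0 : ℝ)..1, Ω x s)
        (ω (∫ x in (0 : ℝ)..1, Ω x t) * A t -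
          Real.exp (b / ρ - ∫ u in (t - 1 / ρ)..t, α (A u)) *
            ω (∫ x in (0 : ℝ)..1, Ω x (t - 1 / ρ)) * A (t - 1 / ρ) +
          (b - α (A t)) * ∫ x in (0 : ℝ)..1, Ω x t) t ∧
      HasDerivAt (fun s => ∫ u in (s - 1 / ρ)..s, α (A u))
        (α (A t) - α (A (t - 1 / ρ))) t := by
  obtain ⟨hA, hPDE, hBC, hΩc, hΩtc, hΩxc⟩ := hsol
  intro t ht
  have hρinv : (0:ℝ) < 1/ρ := by positivity
  have ht0 : (0:ℝ) < t - 1/ρ := by linarith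
  have htpos : (0:ℝ) < t := by linarith
  -- continuity facts
  have hAc : ∀ u ∈ Ioi (0:ℝ), ContinuousAt A u := fun u hu => (hA u hu).continuousAt
  have hconts : ∀ u : ℝ, 0 < u → ContinuousAt (fun v => α (A v)) u := fun u hu =>
    hαc.continuousAt.comp (hAc u hu)
  have hfc : ContinuousOn (fun u => α (A u)) (Ioi (0:ℝ)) := fun u hu =>
    (hconts u hu).continuousWithinAt
  have hint : ∀ a c : ℝ, 0 < a → 0 < c → IntervalIntegrable (fun v => α (A v)) volume a c := by
    intro a c ha hc
    apply ContinuousOn.intervalIntegrable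
    apply hfc.mono
    intro y hy
    rcases le_total a c with h | h
    · rw [uIcc_of_le h] at hy; exact lt_of_lt_of_le ha hy.1
    · rw [uIcc_of_ge h] at hy; exact lt_of_lt_of_le hc hy.1
  have hmeasf : ∀ u ∈ Ioi (0:ℝ), StronglyMeasurableAtFilter (fun v => α (A v)) (𝓝 u) volume :=
    ContinuousOn.stronglyMeasurableAtFilter isOpen_Ioi hfc
  -- Part 2 : derivative of C
  have hD1 : HasDerivAt (fun s => ∫ u in (t - 1/ρ)..s, α (A u)) (α (A t)) t :=
    intervalIntegral.integral_hasDerivAt_right (hint _ _ ht0 htpos) (hmeasf t htpos)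
      (hconts t htpos)
  have hD2' : HasDerivAt (fun s => ∫ u in (t - 1/ρ)..s, α (A u)) (α (A (t - 1/ρ))) (t - 1/ρ) :=
    intervalIntegral.integral_hasDerivAt_right (hint _ _ ht0 ht0) (hmeasf _ ht0) (hconts _ ht0)
  have hD2 : HasDerivAt (fun s => ∫ u in (t - 1/ρ)..(s - 1/ρ), α (A u)) (α (A (t - 1/ρ))) t := by
    have h := hD2'.comp t ((hasDerivAt_id t).sub_const (1/ρ))
    simpa [Function.comp_def] using h
  have hpart2 : HasDerivAt (fun s => ∫ u in (s - 1/ρ)..s, α (A u))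
      (α (A t) - α (A (t - 1/ρ))) t := by
    apply (hD1.sub hD2).congr_of_eventuallyEq
    have hball : Metric.ball t ((t - 1/ρ)/2) ∈ 𝓝 t := Metric.ball_mem_nhds _ (by positivity)
    filter_upwards [hball] with s hs
    rw [Metric.mem_ball, Real.dist_eq, abs_sub_lt_iff] at hs
    have hs1 : 0 < s - 1/ρ := by linarith
    have hs0 : 0 < s := by linarith
    exact (intervalIntegral.integral_interval_sub_left (hint _ _ ht0 hs0)
      (hint _ _ ht0 hs1)).symm
  -- slice continuity helper
  have hslice : ∀ F : ℝ → ℝ → ℝ, ContinuousOn (fun p : ℝ × ℝ => F p.1 p.2)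
      (Icc 0 1 ×ˢ Ioi 0) → ∀ s : ℝ, 0 < s → ContinuousOn (fun x => F x s) (Icc (0:ℝ) 1) := by
    intro F hF s hs
    have h1 : ContinuousOn (fun x : ℝ => ((x, s) : ℝ × ℝ)) (Icc 0 1) :=
      (continuous_id.prodMk continuous_const).continuousOn
    exact hF.comp h1 (fun x hx => ⟨hx, hs⟩)
  have h01 : uIcc (0:ℝ) 1 = Icc 0 1 := uIcc_of_le zero_le_one
  have huIcc_sub : ∀ a c : ℝ, a ∈ Icc (0:ℝ) 1 → c ∈ Icc (0:ℝ) 1 → uIcc a c ⊆ Icc 0 1 := by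
    intro a c ha hc y hy
    rcases Set.mem_uIcc.1 hy with h | h
    · exact ⟨by linarith [ha.1, h.1], by linarith [hc.2, h.2]⟩
    · exact ⟨by linarith [hc.1, h.1], by linarith [ha.2, h.2]⟩
  -- Part B : differentiate under the integral sign
  have hεpos : (0:ℝ) < t/2 := by positivity
  have hmeasΩ : ∀ᶠ s in 𝓝 t, AEStronglyMeasurable (fun x => Ω x s)
      (MeasureTheory.volume.restrict (Set.uIoc (0:ℝ) 1)) := by
    filter_upwards [Ioi_mem_nhds htpos] with s hs
    rw [uIoc_of_le zero_le_one]
    exact ((hslice Ω hΩc s hs).mono Ioc_subset_Icc_self).aestronglyMeasurable measurableSet_Ioc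
  have hFint : IntervalIntegrable (fun x => Ω x t) MeasureTheory.volume 0 1 :=
    ContinuousOn.intervalIntegrable (by rw [h01]; exact hslice Ω hΩc t htpos)
  have hF'meas : AEStronglyMeasurable (fun x => Ωt x t)
      (MeasureTheory.volume.restrict (Set.uIoc (0:ℝ) 1)) := by
    rw [uIoc_of_le zero_le_one]
    exact ((hslice Ωt hΩtc t htpos).mono Ioc_subset_Icc_self).aestronglyMeasurable
      measurableSet_Ioc
  obtain ⟨M, hM⟩ : ∃ M, ∀ p ∈ Icc (0:ℝ) 1 ×ˢ Icc (t/2) (t + t/2), ‖Ωt p.1 p.2‖ ≤ M := by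
    have hcomp : IsCompact (Icc (0:ℝ) 1 ×ˢ Icc (t/2) (t + t/2)) :=
      isCompact_Icc.prod isCompact_Icc
    have hsub : (Icc (0:ℝ) 1 ×ˢ Icc (t/2) (t + t/2)) ⊆ Icc 0 1 ×ˢ Ioi 0 := by
      intro p hp; exact ⟨hp.1, lt_of_lt_of_le hεpos hp.2.1⟩
    exact hcomp.exists_bound_of_continuousOn (hΩtc.mono hsub)
  have hmain0 : HasDerivAt (fun s => ∫ x in (0:ℝ)..1, Ω x s) (∫ x in (0:ℝ)..1, Ωt x t) t := by
    have h := intervalIntegral.hasDerivAt_integral_of_dominated_loc_of_deriv_le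
      (F := fun s x => Ω x s) (F' := fun s x => Ωt x s) (x₀ := t) (bound := fun _ => M)
      (Metric.ball_mem_nhds t hεpos) hmeasΩ hFint hF'meas ?_ ?_ ?_
    · exact h.2
    · apply Filter.Eventually.of_forall
      intro x hx s hs
      rw [Metric.mem_ball, Real.dist_eq, abs_sub_lt_iff] at hs
      rw [uIoc_of_le zero_le_one] at hx
      exact hM (x, s) ⟨Ioc_subset_Icc_self hx, by constructor <;> linarith⟩
    · exact intervalIntegrable_const
    · apply Filter.Eventually.of_forall
      intro x hx s hs
      rw [Metric.mem_ball, Real.dist_eq, abs_sub_lt_iff] at hs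
      rw [uIoc_of_le zero_le_one] at hx
      have hs0 : 0 < s := by linarith
      exact (hPDE s hs0 x (Ioc_subset_Icc_self hx)).1
  -- FTC in x for Ωx at a fixed positive time
  have hΩxint : ∀ s : ℝ, 0 < s → ∀ a c : ℝ, a ∈ Icc (0:ℝ) 1 → c ∈ Icc (0:ℝ) 1 →
      IntervalIntegrable (fun x => Ωx x s) MeasureTheory.volume a c := fun s hs a c ha hc =>
    ContinuousOn.intervalIntegrable ((hslice Ωx hΩxc s hs).mono (huIcc_sub a c ha hc))
  have hFTCx : ∀ s : ℝ, 0 < s → ∀ a c : ℝ, a ∈ Icc (0:ℝ) 1 → c ∈ Icc (0:ℝ) 1 →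
      ∫ y in a..c, Ωx y s = Ω c s - Ω a s := by
    intro s hs a c ha hc
    apply intervalIntegral.integral_eq_sub_of_hasDeriv_right
    · exact (hslice Ω hΩc s hs).mono (huIcc_sub a c ha hc)
    · intro y hy
      have hy01 : y ∈ Ioo (0:ℝ) 1 :=
        ⟨lt_of_le_of_lt (le_min ha.1 hc.1) hy.1, lt_of_lt_of_le hy.2 (max_le ha.2 hc.2)⟩
      exact (((hPDE s hs y (Ioo_subset_Icc_self hy01)).2.1).hasDerivAt
        (Icc_mem_nhds hy01.1 hy01.2)).hasDerivWithinAt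
    · exact hΩxint s hs a c ha hc
  -- membership of characteristic coordinate
  have hxchar : ∀ u ∈ Icc (t - 1/ρ) t, ρ * (u - (t - 1/ρ)) ∈ Icc (0:ℝ) 1 := by
    intro u hu
    constructor
    · exact mul_nonneg hρ.le (by linarith [hu.1])
    · have h1 : u - (t - 1/ρ) ≤ 1/ρ := by linarith [hu.2]
      calc ρ * (u - (t - 1/ρ)) ≤ ρ * (1/ρ) := by
            exact mul_le_mul_of_nonneg_left h1 hρ.le
        _ = 1 := mul_one_div_cancel hρ.ne'
  -- the characteristic ODE
  have hchar : ∀ s ∈ Icc (t - 1/ρ) t,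
      HasDerivWithinAt (fun u => Ω (ρ * (u - (t - 1/ρ))) u)
        ((b - α (A s)) * Ω (ρ * (s - (t - 1/ρ))) s) (Icc (t - 1/ρ) t) s := by
    intro s hs
    have hspos : 0 < s := lt_of_lt_of_le ht0 hs.1
    set x0 := ρ * (s - (t - 1/ρ)) with hx0def
    have hx0mem : x0 ∈ Icc (0:ℝ) 1 := hxchar s hs
    obtain ⟨Ht, Hx, Heq⟩ := hPDE s hspos x0 hx0mem
    have hdecomp : ∀ u ∈ Icc (t - 1/ρ) t,
        Ω (ρ * (u - (t - 1/ρ))) u = Ω x0 u + ∫ y in x0..(x0 + ρ * (u - s)), Ωx y u := by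
      intro u hu
      have hupos : 0 < u := lt_of_lt_of_le ht0 hu.1
      have harg : ρ * (u - (t - 1/ρ)) = x0 + ρ * (u - s) := by rw [hx0def]; ring
      have hx1mem : x0 + ρ * (u - s) ∈ Icc (0:ℝ) 1 := by rw [← harg]; exact hxchar u hu
      rw [hFTCx u hupos x0 (x0 + ρ * (u - s)) hx0mem hx1mem, harg]
      ring
    have hR : HasDerivWithinAt (fun u => ∫ y in x0..(x0 + ρ * (u - s)), Ωx y u)
        (ρ * Ωx x0 s) (Icc (t - 1/ρ) t) s := by
      rw [hasDerivWithinAt_iff_isLittleO]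
      rw [Asymptotics.isLittleO_iff]
      intro c hc
      have hcw : ContinuousWithinAt (fun p : ℝ × ℝ => Ωx p.1 p.2)
          (Icc 0 1 ×ˢ Ioi 0) (x0, s) := hΩxc _ ⟨hx0mem, hspos⟩
      rw [Metric.continuousWithinAt_iff] at hcw
      obtain ⟨δ, hδpos, hδ⟩ := hcw (c/ρ) (by positivity)
      have hδ1 : ρ * (δ/(ρ+1)) < δ := by
        rw [mul_div_assoc', div_lt_iff₀ (by positivity : (0:ℝ) < ρ + 1)]
        nlinarith
      have hδ2 : δ/(ρ+1) ≤ δ := div_le_self hδpos.le (by linarith)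
      filter_upwards [mem_nhdsWithin_of_mem_nhds
        (Metric.ball_mem_nhds s (by positivity : (0:ℝ) < δ/(ρ+1))), self_mem_nhdsWithin]
        with u hudist humem
      rw [Metric.mem_ball, Real.dist_eq] at hudist
      have hupos : 0 < u := lt_of_lt_of_le ht0 humem.1
      have harg : ρ * (u - (t - 1/ρ)) = x0 + ρ * (u - s) := by rw [hx0def]; ring
      have hx1mem : x0 + ρ * (u - s) ∈ Icc (0:ℝ) 1 := by rw [← harg]; exact hxchar u humem
      have hIint : IntervalIntegrable (fun y => Ωx y u) MeasureTheory.volume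
          x0 (x0 + ρ * (u - s)) := hΩxint u hupos _ _ hx0mem hx1mem
      have hsplit : (∫ y in x0..(x0 + ρ * (s - s)), Ωx y s) = 0 := by
        simp
      have hkey : (∫ y in x0..(x0 + ρ * (u - s)), Ωx y u) - (u - s) • (ρ * Ωx x0 s) =
          ∫ y in x0..(x0 + ρ * (u - s)), (Ωx y u - Ωx x0 s) := by
        rw [intervalIntegral.integral_sub hIint intervalIntegrable_const,
          intervalIntegral.integral_const]
        simp only [smul_eq_mul, add_sub_cancel_left]
        ring
      have hbnd : ‖∫ y in x0..(x0 + ρ * (u - s)), (Ωx y u - Ωx x0 s)‖ ≤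
          (c/ρ) * |x0 + ρ * (u - s) - x0| := by
        apply intervalIntegral.norm_integral_le_of_norm_le_const
        intro y hy
        have hy' : y ∈ uIcc x0 (x0 + ρ * (u - s)) := uIoc_subset_uIcc hy
        have hy01 : y ∈ Icc (0:ℝ) 1 := huIcc_sub _ _ hx0mem hx1mem hy'
        have hyx0 : |y - x0| ≤ |ρ * (u - s)| := by
          rcases Set.mem_uIcc.1 hy' with h | h
          · rw [abs_sub_le_iff]
            constructor <;> [linarith [h.1, h.2, le_abs_self (ρ * (u - s))];
              linarith [h.1, h.2, abs_nonneg (ρ * (u - s))]]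
          · rw [abs_sub_le_iff]
            constructor <;> [linarith [h.1, h.2, abs_nonneg (ρ * (u - s))];
              linarith [h.1, h.2, neg_abs_le (ρ * (u - s))]]
        have hdistlt : dist ((y, u) : ℝ × ℝ) (x0, s) < δ := by
          rw [Prod.dist_eq]
          apply max_lt
          · rw [Real.dist_eq]
            calc |y - x0| ≤ |ρ * (u - s)| := hyx0
              _ = ρ * |u - s| := by rw [abs_mul, abs_of_pos hρ]
              _ < ρ * (δ/(ρ+1)) := by
                  exact mul_lt_mul_of_pos_left hudist hρ
              _ < δ := hδ1
          · rw [Real.dist_eq]; exact lt_of_lt_of_le hudist hδ2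
        have := hδ (Set.mk_mem_prod hy01 (Set.mem_Ioi.2 hupos)) hdistlt
        rw [Real.dist_eq] at this
        exact this.le
      calc ‖(∫ y in x0..(x0 + ρ * (u - s)), Ωx y u) -
            (∫ y in x0..(x0 + ρ * (s - s)), Ωx y s) - (u - s) • (ρ * Ωx x0 s)‖
          = ‖∫ y in x0..(x0 + ρ * (u - s)), (Ωx y u - Ωx x0 s)‖ := by
            rw [hsplit, sub_zero, hkey]
        _ ≤ (c/ρ) * |x0 + ρ * (u - s) - x0| := hbnd
        _ = c * |u - s| := by
            rw [add_sub_cancel_left, abs_mul, abs_of_pos hρ]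
            field_simp
        _ = c * ‖u - s‖ := by rw [Real.norm_eq_abs]
    have hsum : HasDerivWithinAt (fun u => Ω x0 u + ∫ y in x0..(x0 + ρ * (u - s)), Ωx y u)
        (Ωt x0 s + ρ * Ωx x0 s) (Icc (t - 1/ρ) t) s := Ht.hasDerivWithinAt.add hR
    have hg : HasDerivWithinAt (fun u => Ω (ρ * (u - (t - 1/ρ))) u)
        (Ωt x0 s + ρ * Ωx x0 s) (Icc (t - 1/ρ) t) s :=
      hsum.congr (fun u hu => hdecomp u hu) (hdecomp s hs)
    rw [← Heq]
    exact hg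
  -- integrate the characteristic ODE
  have hφc : ContinuousOn (fun u => b - α (A u)) (Ioi (0:ℝ)) := continuousOn_const.sub hfc
  have hφint : ∀ a c : ℝ, 0 < a → 0 < c →
      IntervalIntegrable (fun u => b - α (A u)) MeasureTheory.volume a c := fun a c ha hc =>
    intervalIntegrable_const.sub (hint a c ha hc)
  have hI : ∀ s ∈ Icc (t - 1/ρ) t,
      HasDerivAt (fun v => ∫ u in (t - 1/ρ)..v, (b - α (A u))) (b - α (A s)) s := by
    intro s hs
    have hspos : 0 < s := lt_of_lt_of_le ht0 hs.1
    exact intervalIntegral.integral_hasDerivAt_right (hφint _ _ ht0 hspos)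
      (ContinuousOn.stronglyMeasurableAtFilter isOpen_Ioi hφc s hspos)
      (continuousAt_const.sub (hconts s hspos))
  have hG : ∀ s ∈ Icc (t - 1/ρ) t, HasDerivWithinAt
      (fun u => Ω (ρ * (u - (t - 1/ρ))) u * Real.exp (-(∫ v in (t - 1/ρ)..u, (b - α (A v)))))
      0 (Icc (t - 1/ρ) t) s := by
    intro s hs
    have hE : HasDerivAt (fun u => Real.exp (-(∫ v in (t - 1/ρ)..u, (b - α (A v)))))
        (Real.exp (-(∫ v in (t - 1/ρ)..s, (b - α (A v)))) * -(b - α (A s))) s := by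
      have h1 := ((hI s hs).neg).exp
      simpa using h1
    have h := (hchar s hs).mul hE.hasDerivWithinAt
    exact h.congr_deriv (by ring)
  have hGconst : Ω (ρ * (t - (t - 1/ρ))) t *
      Real.exp (-(∫ v in (t - 1/ρ)..t, (b - α (A v)))) =
      Ω (ρ * ((t - 1/ρ) - (t - 1/ρ))) (t - 1/ρ) *
      Real.exp (-(∫ v in (t - 1/ρ)..(t - 1/ρ), (b - α (A v)))) := by
    apply constant_of_has_deriv_right_zero
      (fun s hs => (hG s hs).continuousWithinAt)
    · intro s hs
      exact (hG s (Ico_subset_Icc_self hs)).mono_of_mem_nhdsWithin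
        (Icc_mem_nhdsGE_of_mem hs)
    · exact right_mem_Icc.2 (by linarith)
  have hρ1 : ρ * (t - (t - 1/ρ)) = 1 := by field_simp; ring
  have hIval : ∫ v in (t - 1/ρ)..t, (b - α (A v)) = b/ρ - ∫ v in (t - 1/ρ)..t, α (A v) := by
    rw [intervalIntegral.integral_sub intervalIntegrable_const (hint _ _ ht0 htpos),
      intervalIntegral.integral_const]
    simp only [smul_eq_mul]
    congr 1
    field_simp
    ring
  have hΩ1 : ρ * Ω 1 t =
      Real.exp (b/ρ - ∫ u in (t - 1/ρ)..t, α (A u)) *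
        ω (∫ x in (0:ℝ)..1, Ω x (t - 1/ρ)) * A (t - 1/ρ) := by
    have h2 : Ω 1 t * Real.exp (-(b/ρ - ∫ v in (t - 1/ρ)..t, α (A v))) =
        Ω 0 (t - 1/ρ) := by
      have h := hGconst
      rw [hρ1, hIval] at h
      rw [h]
      simp
    have hbc := hBC (t - 1/ρ) ht0
    have hexp : Real.exp (-(b/ρ - ∫ v in (t - 1/ρ)..t, α (A v))) *
        Real.exp (b/ρ - ∫ v in (t - 1/ρ)..t, α (A v)) = 1 := by
      rw [← Real.exp_add]; simp
    have h3 : Ω 1 t = Ω 0 (t - 1/ρ) * Real.exp (b/ρ - ∫ v in (t - 1/ρ)..t, α (A v)) := by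
      calc Ω 1 t = Ω 1 t * (Real.exp (-(b/ρ - ∫ v in (t - 1/ρ)..t, α (A v))) *
              Real.exp (b/ρ - ∫ v in (t - 1/ρ)..t, α (A v))) := by rw [hexp, mul_one]
        _ = (Ω 1 t * Real.exp (-(b/ρ - ∫ v in (t - 1/ρ)..t, α (A v)))) *
              Real.exp (b/ρ - ∫ v in (t - 1/ρ)..t, α (A v)) := by ring
        _ = Ω 0 (t - 1/ρ) * Real.exp (b/ρ - ∫ v in (t - 1/ρ)..t, α (A v)) := by rw [h2]
    rw [h3, hbc]
    field_simp
  -- value of the derivative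
  have hΩ0 : ρ * Ω 0 t = ω (∫ x in (0:ℝ)..1, Ω x t) * A t := by
    rw [hBC t htpos]; field_simp
  have hval : (∫ x in (0:ℝ)..1, Ωt x t) =
      ω (∫ x in (0:ℝ)..1, Ω x t) * A t -
        Real.exp (b/ρ - ∫ u in (t - 1/ρ)..t, α (A u)) *
          ω (∫ x in (0:ℝ)..1, Ω x (t - 1/ρ)) * A (t - 1/ρ) +
        (b - α (A t)) * ∫ x in (0:ℝ)..1, Ω x t := by
    have hcongr : (∫ x in (0:ℝ)..1, Ωt x t) =
        ∫ x in (0:ℝ)..1, ((b - α (A t)) * Ω x t - ρ * Ωx x t) := by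
      apply intervalIntegral.integral_congr
      intro x hx
      rw [h01] at hx
      have h := (hPDE t htpos x hx).2.2
      show Ωt x t = (b - α (A t)) * Ω x t - ρ * Ωx x t
      linarith
    have hsub : (∫ x in (0:ℝ)..1, ((b - α (A t)) * Ω x t - ρ * Ωx x t)) =
        (∫ x in (0:ℝ)..1, (b - α (A t)) * Ω x t) - ∫ x in (0:ℝ)..1, ρ * Ωx x t := by
      apply intervalIntegral.integral_sub
      · exact (hFint.const_mul _)
      · exact (hΩxint t htpos 0 1 (left_mem_Icc.2 zero_le_one)
          (right_mem_Icc.2 zero_le_one)).const_mul _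
    have hmul1 : (∫ x in (0:ℝ)..1, (b - α (A t)) * Ω x t) =
        (b - α (A t)) * ∫ x in (0:ℝ)..1, Ω x t := intervalIntegral.integral_const_mul _ _
    have hmul2 : (∫ x in (0:ℝ)..1, ρ * Ωx x t) = ρ * ∫ x in (0:ℝ)..1, Ωx x t :=
      intervalIntegral.integral_const_mul _ _
    have hftc : (∫ x in (0:ℝ)..1, Ωx x t) = Ω 1 t - Ω 0 t :=
      hFTCx t htpos 0 1 (left_mem_Icc.2 zero_le_one) (right_mem_Icc.2 zero_le_one)
    rw [hcongr, hsub, hmul1, hmul2, hftc]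
    have := hΩ1
    have := hΩ0
    nlinarith [hΩ1, hΩ0]
  refine ⟨?_, hpart2⟩
  rw [← hval]
  exact hmain0
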